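/- For all natural numbers n ≥ 2 and k ≥ 3 there exists a finite simple graph G with χ(G) = k, Δ(G) = 2k, vs_χ(G) = 2n, and ivs_χ(G) = 3n; in particular, the equality vs_χ = ivs_χ can fail for graphs with χ(G) = Δ(G)/2. -/

import Mathlib

open SimpleGraph

/-- The chromatic number of a graph, as a natural number (for finite graphs this
is the usual chromatic number). -/
noncomputable def chromNum {V : Type*} (G : SimpleGraph V) : ℕ :=
  sInf {n : ℕ | G.Colorable n}

/-- The maximum degree Δ(G) of a finite graph. -/
noncomputable def maxDeg {V : Type*} [Fintype V] (G : SimpleGraph V) : ℕ :=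
  Finset.univ.sup fun v => Nat.card (G.neighborSet v)

/-- The chromatic vertex stability number: the minimum number of vertices whose
deletion results in a graph with chromatic number χ(G) − 1. -/
noncomputable def vsChi {V : Type*} [Fintype V] (G : SimpleGraph V) : ℕ :=
  sInf {k : ℕ | ∃ S : Finset V, S.card = k ∧
    chromNum (G.induce ((S : Set V))ᶜ) = chromNum G - 1}

/-- The independent chromatic vertex stability number: the minimum size of an
independent set of vertices whose deletion results in a graph with chromatic
number χ(G) − 1. -/
noncomputable def ivsChi {V : Type*} [Fintype V] (G : SimpleGraph V) : ℕ :=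
  sInf {k : ℕ | ∃ S : Finset V, S.card = k ∧
    (∀ u ∈ S, ∀ v ∈ S, ¬ G.Adj u v) ∧
    chromNum (G.induce ((S : Set V))ᶜ) = chromNum G - 1}

/-- The chromatic edge stability number: the minimum number of edges whose
deletion results in a graph with chromatic number χ(G) − 1. -/
noncomputable def esChi {V : Type*} (G : SimpleGraph V) : ℕ :=
  sInf {k : ℕ | ∃ F : Finset (Sym2 V), ↑F ⊆ G.edgeSet ∧ F.card = k ∧
    chromNum (G.deleteEdges ↑F) = chromNum G - 1}

lemma colorable_iff_nat {V : Type*} (G : SimpleGraph V) (n : ℕ) :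
    G.Colorable n ↔ ∃ c : V → ℕ, (∀ v, c v < n) ∧ ∀ u v, G.Adj u v → c u ≠ c v := by
  rw [SimpleGraph.colorable_iff_exists_bdd_nat_coloring]
  constructor
  · rintro ⟨C, hC⟩
    exact ⟨C, hC, fun u v h => C.valid h⟩
  · rintro ⟨c, h1, h2⟩
    exact ⟨SimpleGraph.Coloring.mk c (fun {u v} h => h2 u v h), h1⟩

lemma chromNum_eq {V : Type*} {G : SimpleGraph V} {k : ℕ} (hk : 1 ≤ k)
    (h1 : G.Colorable k) (h2 : ¬ G.Colorable (k-1)) : chromNum G = k := by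
  refine le_antisymm (Nat.sInf_le h1) (le_csInf ⟨k, h1⟩ ?_)
  intro b hb
  by_contra hlt
  push_neg at hlt
  exact h2 ((hb : G.Colorable b).mono (by omega))

lemma colorable_chromNum {V : Type*} [Finite V] (G : SimpleGraph V) :
    G.Colorable (chromNum G) := by
  cases nonempty_fintype V
  exact Nat.sInf_mem (⟨Fintype.card V, G.colorable_of_fintype⟩ :
    {n : ℕ | G.Colorable n}.Nonempty)

lemma not_colorable_of_clique {V : Type*} {G : SimpleGraph V} {k : ℕ} (hk : 1 ≤ k)
    (Q : Finset V) (hcard : Q.card = k)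
    (hadj : ∀ u ∈ Q, ∀ v ∈ Q, u ≠ v → G.Adj u v) :
    ¬ G.Colorable (k-1) := by
  intro hc
  have hcf : G.CliqueFree k := hc.cliqueFree (by omega)
  exact hcf Q ⟨fun u hu v hv huv => hadj u hu v hv huv, hcard⟩

/-- clique avoiding S gives non-colorability of the induced graph on Sᶜ -/
lemma not_colorable_induce_of_clique {V : Type*} [DecidableEq V] {G : SimpleGraph V} {k : ℕ}
    (hk : 1 ≤ k)
    (S : Finset V) (Q : Finset V) (hcard : Q.card = k)
    (hadj : ∀ u ∈ Q, ∀ v ∈ Q, u ≠ v → G.Adj u v)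
    (hdisj : ∀ w ∈ Q, w ∉ S) :
    ¬ (G.induce ((S : Set V))ᶜ).Colorable (k-1) := by
  have hmem : ∀ w ∈ Q, w ∈ ((S : Set V))ᶜ := by
    intro w hw
    simpa using hdisj w hw
  set f : {w // w ∈ Q} → ↥(((S : Set V))ᶜ) := fun w => ⟨w.1, hmem w.1 w.2⟩ with hf
  have hfinj : Function.Injective f := by
    intro a b hab
    have h2 := congrArg Subtype.val hab
    simp only [hf] at h2
    exact Subtype.ext h2
  refine not_colorable_of_clique hk (Q.attach.image f) ?_ ?_
  · rw [Finset.card_image_of_injective _ hfinj, Finset.card_attach, hcard]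
  · intro u hu v hv hne
    simp only [Finset.mem_image, Finset.mem_attach, true_and] at hu hv
    obtain ⟨⟨u', hu'⟩, rfl⟩ := hu
    obtain ⟨⟨v', hv'⟩, rfl⟩ := hv
    have : u' ≠ v' := fun h => hne (by simp [hf, h])
    exact hadj u' hu' v' hv' this

lemma chromNum_induce_ne {m : ℕ} {G : SimpleGraph (Fin m)} {j : ℕ}
    (S : Finset (Fin m)) (h : ¬ (G.induce ((S : Set (Fin m)))ᶜ).Colorable j) :
    chromNum (G.induce ((S : Set (Fin m)))ᶜ) ≠ j := by
  intro he
  exact h (he ▸ colorable_chromNum _)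

structure Gadget (k : ℕ) (W : Type) [Fintype W] [DecidableEq W] where
  H : SimpleGraph W
  ck : W → ℕ
  ck_lt : ∀ w, ck w < k
  ck_proper : ∀ u v, H.Adj u v → ck u ≠ ck v
  rob2 : ∀ S : Finset W, S.card ≤ 2 → (∀ u ∈ S, ∀ v ∈ S, ¬ H.Adj u v) →
    ∃ Q : Finset W, Q.card = k ∧ (∀ u ∈ Q, ∀ v ∈ Q, u ≠ v → H.Adj u v) ∧
      ∀ w ∈ Q, w ∉ S
  u₀ : W
  v₀ : W
  huv : H.Adj u₀ v₀
  cp : W → ℕ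
  cp_lt : ∀ w, cp w < k - 1
  cp_proper : ∀ u v, H.Adj u v → u ∉ ({u₀, v₀} : Finset W) →
    v ∉ ({u₀, v₀} : Finset W) → cp u ≠ cp v
  Qp : Finset W
  Qp_card : Qp.card = k - 1
  Qp_clique : ∀ u ∈ Qp, ∀ v ∈ Qp, u ≠ v → H.Adj u v
  Qp_disj : ∀ w ∈ Qp, w ∉ ({u₀, v₀} : Finset W)
  T : Finset W
  T_card : T.card = 3
  T_indep : ∀ u ∈ T, ∀ v ∈ T, ¬ H.Adj u v
  ct : W → ℕ
  ct_lt : ∀ w, ct w < k - 1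
  ct_proper : ∀ u v, H.Adj u v → u ∉ T → v ∉ T → ct u ≠ ct v
  Qt : Finset W
  Qt_card : Qt.card = k - 1
  Qt_clique : ∀ u ∈ Qt, ∀ v ∈ Qt, u ≠ v → H.Adj u v
  Qt_disj : ∀ w ∈ Qt, w ∉ T
  hdeg : maxDeg H = 2 * k

theorem gadget_main {k : ℕ} (hk : 3 ≤ k) {W : Type} [Fintype W] [DecidableEq W]
    (gd : Gadget k W) (n : ℕ) (hn : 1 ≤ n) :
    ∃ (m : ℕ) (G : SimpleGraph (Fin m)),
      chromNum G = k ∧ maxDeg G = 2 * k ∧ vsChi G = 2 * n ∧ ivsChi G = 3 * n := by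
  classical
  set m := Fintype.card (Fin n × W) with hm
  set e : Fin m ≃ (Fin n × W) := (Fintype.equivFin (Fin n × W)).symm with he
  set H := gd.H with hH
  set G : SimpleGraph (Fin m) :=
    { Adj := fun x y => (e x).1 = (e y).1 ∧ H.Adj (e x).2 (e y).2
      symm := by
        constructor
        rintro x y ⟨h1, h2⟩
        exact ⟨h1.symm, h2.symm⟩
      loopless := ⟨fun x ⟨h1, h2⟩ => H.loopless.irrefl _ h2⟩ } with hGdef
  have hGadj : ∀ x y, G.Adj x y ↔ ((e x).1 = (e y).1 ∧ H.Adj (e x).2 (e y).2) :=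
    fun x y => Iff.rfl
  have i₀ : Fin n := ⟨0, hn⟩
  -- lift a clique of H into a copy in G
  have liftClique : ∀ (i : Fin n) (Q : Finset W) (r : ℕ), Q.card = r →
      (∀ u ∈ Q, ∀ v ∈ Q, u ≠ v → H.Adj u v) →
      ∃ Q' : Finset (Fin m), Q'.card = r ∧
        (∀ u ∈ Q', ∀ v ∈ Q', u ≠ v → G.Adj u v) ∧
        (∀ x ∈ Q', (e x).1 = i ∧ (e x).2 ∈ Q) := by
    intro i Q r hr hQ
    refine ⟨Q.image (fun w => e.symm (i, w)), ?_, ?_, ?_⟩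
    · rw [Finset.card_image_of_injective _
        (fun a b hab => by
          have := congrArg e hab
          simpa using this), hr]
    · intro u hu v hv huv
      simp only [Finset.mem_image] at hu hv
      obtain ⟨a, ha, rfl⟩ := hu
      obtain ⟨b, hb, rfl⟩ := hv
      have hab : a ≠ b := fun h => huv (by rw [h])
      rw [hGadj]
      exact ⟨by simp, by simpa using hQ a ha b hb hab⟩
    · intro x hx
      simp only [Finset.mem_image] at hx
      obtain ⟨a, ha, rfl⟩ := hx
      exact ⟨by simp, by simpa using ha⟩
  -- non-colorability of induced graphs when some copy keeps a full clique
  have noDrop : ∀ S : Finset (Fin m), ∀ i : Fin n,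
      (S.filter (fun x => (e x).1 = i)).card ≤ 2 →
      (∀ u ∈ S, ∀ v ∈ S, (e u).1 = i → (e v).1 = i → ¬ G.Adj u v) →
      ¬ (G.induce ((S : Set (Fin m)))ᶜ).Colorable (k-1) := by
    intro S i hcard hindep
    set Ti : Finset W := (S.filter (fun x => (e x).1 = i)).image (fun x => (e x).2)
      with hTi
    have hTicard : Ti.card ≤ 2 := le_trans (Finset.card_image_le) hcard
    have hTimem : ∀ w, w ∈ Ti ↔ ∃ x ∈ S, (e x).1 = i ∧ (e x).2 = w := by
      intro w
      simp only [hTi, Finset.mem_image, Finset.mem_filter]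
      constructor
      · rintro ⟨x, ⟨hx1, hx2⟩, rfl⟩; exact ⟨x, hx1, hx2, rfl⟩
      · rintro ⟨x, hx1, hx2, rfl⟩; exact ⟨x, ⟨hx1, hx2⟩, rfl⟩
    have hTiindep : ∀ u ∈ Ti, ∀ v ∈ Ti, ¬ H.Adj u v := by
      intro u hu v hv hadj
      obtain ⟨x, hx1, hx2, hx3⟩ := (hTimem u).1 hu
      obtain ⟨y, hy1, hy2, hy3⟩ := (hTimem v).1 hv
      refine hindep x hx1 y hy1 hx2 hy2 ?_
      rw [hGadj]
      rw [hx2, hy2, hx3, hy3]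
      exact ⟨rfl, hadj⟩
    obtain ⟨Q, hQcard, hQadj, hQdisj⟩ := gd.rob2 Ti hTicard hTiindep
    obtain ⟨Q', hQ'card, hQ'adj, hQ'mem⟩ := liftClique i Q k hQcard hQadj
    refine not_colorable_induce_of_clique (by omega) S Q' hQ'card hQ'adj ?_
    intro x hx hxS
    obtain ⟨hx1, hx2⟩ := hQ'mem x hx
    exact hQdisj _ hx2 ((hTimem (e x).2).2 ⟨x, hxS, hx1, rfl⟩)
  -- chromatic number of G
  have hcolk : G.Colorable k := by
    rw [colorable_iff_nat]
    refine ⟨fun x => gd.ck (e x).2, fun v => gd.ck_lt _, ?_⟩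
    intro u v huv
    rw [hGadj] at huv
    exact gd.ck_proper _ _ huv.2
  have hncolk : ¬ G.Colorable (k-1) := by
    obtain ⟨Q, hQcard, hQadj, hQdisj⟩ := gd.rob2 ∅ (by simp) (by simp)
    obtain ⟨Q', hQ'card, hQ'adj, _⟩ := liftClique i₀ Q k hQcard hQadj
    exact not_colorable_of_clique (by omega) Q' hQ'card hQ'adj
  have hχ : chromNum G = k := chromNum_eq (by omega) hcolk hncolk
  -- max degree
  have hdegG : maxDeg G = 2 * k := by
    have hNS : ∀ x : Fin m, Nat.card (G.neighborSet x) =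
        Nat.card (H.neighborSet (e x).2) := by
      intro x
      refine Nat.card_congr ⟨fun y => ⟨(e y.1).2, y.2.2⟩,
        fun u => ⟨e.symm ((e x).1, u.1), ?_⟩, ?_, ?_⟩
      · show G.Adj x (e.symm ((e x).1, u.1))
        rw [hGadj]
        exact ⟨by simp, by simp only [Equiv.apply_symm_apply]; exact u.2⟩
      · rintro ⟨y, hy⟩
        have hy' : G.Adj x y := hy
        rw [hGadj] at hy'
        apply Subtype.ext
        show e.symm ((e x).1, (e y).2) = y
        rw [hy'.1]
        simp
      · rintro ⟨u, hu⟩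
        apply Subtype.ext
        show (e (e.symm ((e x).1, u))).2 = u
        simp
    have h1 : maxDeg G = Finset.univ.sup
        (fun x : Fin m => Nat.card (H.neighborSet (e x).2)) := by
      unfold maxDeg
      exact Finset.sup_congr rfl (fun x _ => hNS x)
    rw [h1, ← gd.hdeg]
    unfold maxDeg
    apply le_antisymm
    · exact Finset.sup_le (fun x _ => Finset.le_sup (f := fun v => Nat.card (gd.H.neighborSet v)) (Finset.mem_univ (e x).2))
    · refine Finset.sup_le (fun w _ => ?_)
      have : Nat.card (H.neighborSet w) =
          Nat.card (H.neighborSet (e (e.symm (i₀, w))).2) := by simp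
      rw [this]
      exact Finset.le_sup (f := fun x => Nat.card (H.neighborSet (e x).2))
        (Finset.mem_univ (e.symm (i₀, w)))
  -- generic upper bound construction
  have upperMem : ∀ (P : Finset W) (c : W → ℕ) (QQ : Finset W),
      (∀ w, c w < k - 1) →
      (∀ u v, H.Adj u v → u ∉ P → v ∉ P → c u ≠ c v) →
      QQ.card = k - 1 → (∀ u ∈ QQ, ∀ v ∈ QQ, u ≠ v → H.Adj u v) →
      (∀ w ∈ QQ, w ∉ P) →
      chromNum (G.induce ((((Finset.univ ×ˢ P).image e.symm : Finset (Fin m)) :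
        Set (Fin m)))ᶜ) = k - 1 := by
    intro P c QQ hlt hproper hQQcard hQQadj hQQdisj
    set S : Finset (Fin m) := (Finset.univ ×ˢ P).image e.symm with hS
    have hSmem : ∀ x : Fin m, x ∈ S ↔ (e x).2 ∈ P := by
      intro x
      simp only [hS, Finset.mem_image, Finset.mem_product, Finset.mem_univ, true_and]
      constructor
      · rintro ⟨⟨i, w⟩, hw, rfl⟩
        simpa using hw
      · intro hw
        exact ⟨e x, hw, by simp⟩
    refine chromNum_eq (by omega) ?_ ?_
    · rw [colorable_iff_nat]
      refine ⟨fun z => c (e z.1).2, fun z => hlt _, ?_⟩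
      rintro ⟨u, hu⟩ ⟨v, hv⟩ huv
      have hadj : G.Adj u v := huv
      rw [hGadj] at hadj
      have hu' : u ∉ S := by simpa using hu
      have hv' : v ∉ S := by simpa using hv
      exact hproper _ _ hadj.2 (fun h => hu' ((hSmem u).2 h))
        (fun h => hv' ((hSmem v).2 h))
    · obtain ⟨Q', hQ'card, hQ'adj, hQ'mem⟩ := liftClique i₀ QQ (k-1) hQQcard hQQadj
      have h2 := not_colorable_induce_of_clique (k := k - 1) (by omega) S Q'
        hQ'card hQ'adj ?_
      · convert h2 using 2
      · intro x hx hxS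
        exact hQQdisj _ (hQ'mem x hx).2 ((hSmem x).1 hxS)
  -- vsChi
  have hvs : vsChi G = 2 * n := by
    unfold vsChi
    rw [hχ]
    have hmem : 2 * n ∈ {j : ℕ | ∃ S : Finset (Fin m), S.card = j ∧
        chromNum (G.induce ((S : Set (Fin m)))ᶜ) = k - 1} := by
      refine ⟨(Finset.univ ×ˢ ({gd.u₀, gd.v₀} : Finset W)).image e.symm, ?_, ?_⟩
      · rw [Finset.card_image_of_injective _ e.symm.injective, Finset.card_product,
          Finset.card_univ, Fintype.card_fin,
          Finset.card_pair gd.huv.ne]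
        ring
      · exact upperMem {gd.u₀, gd.v₀} gd.cp gd.Qp gd.cp_lt gd.cp_proper
          gd.Qp_card gd.Qp_clique gd.Qp_disj
    apply le_antisymm (Nat.sInf_le hmem)
    refine le_csInf ⟨2 * n, hmem⟩ ?_
    rintro b ⟨S, hScard, hSchrom⟩
    by_contra hlt
    push_neg at hlt
    -- pigeonhole: some copy receives at most one vertex of S
    have hsum : S.card = ∑ i : Fin n, (S.filter (fun x => (e x).1 = i)).card :=
      Finset.card_eq_sum_card_fiberwise (fun x _ => Finset.mem_univ _)
    have hpig : ∃ i : Fin n, (S.filter (fun x => (e x).1 = i)).card ≤ 1 := by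
      by_contra hno
      push_neg at hno
      have : 2 * n ≤ S.card := by
        rw [hsum]
        calc 2 * n = ∑ _i : Fin n, 2 := by simp [mul_comm]
        _ ≤ _ := Finset.sum_le_sum (fun i _ => hno i)
      omega
    obtain ⟨i, hi⟩ := hpig
    refine noDrop S i (by omega) ?_ (hSchrom ▸ colorable_chromNum _)
    intro u hu v hv hui hvi hadj
    have hu' : u ∈ S.filter (fun x => (e x).1 = i) := Finset.mem_filter.2 ⟨hu, hui⟩
    have hv' : v ∈ S.filter (fun x => (e x).1 = i) := Finset.mem_filter.2 ⟨hv, hvi⟩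
    have := Finset.card_le_one.1 hi u hu' v hv'
    exact G.loopless.irrefl u (this ▸ hadj)
  -- ivsChi
  have hivs : ivsChi G = 3 * n := by
    unfold ivsChi
    rw [hχ]
    have hmem : 3 * n ∈ {j : ℕ | ∃ S : Finset (Fin m), S.card = j ∧
        (∀ u ∈ S, ∀ v ∈ S, ¬ G.Adj u v) ∧
        chromNum (G.induce ((S : Set (Fin m)))ᶜ) = k - 1} := by
      refine ⟨(Finset.univ ×ˢ gd.T).image e.symm, ?_, ?_, ?_⟩
      · rw [Finset.card_image_of_injective _ e.symm.injective, Finset.card_product,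
          Finset.card_univ, Fintype.card_fin, gd.T_card]
        ring
      · intro u hu v hv hadj
        simp only [Finset.mem_image, Finset.mem_product, Finset.mem_univ,
          true_and] at hu hv
        obtain ⟨⟨iu, wu⟩, hwu, rfl⟩ := hu
        obtain ⟨⟨iv, wv⟩, hwv, rfl⟩ := hv
        rw [hGadj] at hadj
        simp only [Equiv.apply_symm_apply] at hadj
        exact gd.T_indep wu (by simpa using hwu) wv (by simpa using hwv) hadj.2
      · exact upperMem gd.T gd.ct gd.Qt gd.ct_lt gd.ct_proper
          gd.Qt_card gd.Qt_clique gd.Qt_disj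
    apply le_antisymm (Nat.sInf_le hmem)
    refine le_csInf ⟨3 * n, hmem⟩ ?_
    rintro b ⟨S, hScard, hSindep, hSchrom⟩
    by_contra hlt
    push_neg at hlt
    have hsum : S.card = ∑ i : Fin n, (S.filter (fun x => (e x).1 = i)).card :=
      Finset.card_eq_sum_card_fiberwise (fun x _ => Finset.mem_univ _)
    have hpig : ∃ i : Fin n, (S.filter (fun x => (e x).1 = i)).card ≤ 2 := by
      by_contra hno
      push_neg at hno
      have : 3 * n ≤ S.card := by
        rw [hsum]
        calc 3 * n = ∑ _i : Fin n, 3 := by simp [mul_comm]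
        _ ≤ _ := Finset.sum_le_sum (fun i _ => hno i)
      omega
    obtain ⟨i, hi⟩ := hpig
    exact noDrop S i hi (fun u hu v hv _ _ => hSindep u hu v hv)
      (hSchrom ▸ colorable_chromNum _)
  exact ⟨m, G, hχ, hdegG, hvs, hivs⟩


lemma maxDeg_eq_sup_degree {V : Type*} [Fintype V] (G : SimpleGraph V)
    [DecidableRel G.Adj] : maxDeg G = Finset.univ.sup (fun v => G.degree v) := by
  unfold maxDeg
  refine Finset.sup_congr rfl (fun v _ => ?_)
  rw [Nat.card_eq_fintype_card]
  exact SimpleGraph.card_neighborSet_eq_degree _ _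

abbrev W4 (r : ℕ) := (Fin 4) ⊕ (Fin 4 × Fin r)

def adj4 (r : ℕ) : W4 r → W4 r → Prop
  | .inl i, .inl j => i ≠ j
  | .inl m, .inr (j, t) => j = m ∨ j = m + 1 ∨ (m = 0 ∧ j = 2 ∧ t.val = 1)
  | .inr (j, t), .inl m => j = m ∨ j = m + 1 ∨ (m = 0 ∧ j = 2 ∧ t.val = 1)
  | .inr (i, t), .inr (j, u) => i = j ∧ t ≠ u

instance (r : ℕ) : DecidableRel (adj4 r) := fun x y =>
  match x, y with
  | .inl i, .inl j => inferInstanceAs (Decidable (i ≠ j))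
  | .inl m, .inr (j, t) => inferInstanceAs (Decidable (_ ∨ _ ∨ _))
  | .inr (j, t), .inl m => inferInstanceAs (Decidable (_ ∨ _ ∨ _))
  | .inr (i, t), .inr (j, u) => inferInstanceAs (Decidable (_ ∧ _))

def G4 (r : ℕ) : SimpleGraph (W4 r) where
  Adj := adj4 r
  symm := by
    constructor
    rintro (i | ⟨j, t⟩) (i' | ⟨j', t'⟩) h <;> simp only [adj4] at h ⊢
    · exact h.symm
    · exact h
    · exact h
    · exact ⟨h.1.symm, h.2.symm⟩
  loopless := by
    constructor
    rintro (i | ⟨j, t⟩) h <;> simp only [adj4] at h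
    · exact h rfl
    · exact h.2 rfl

instance (r : ℕ) : DecidableRel (G4 r).Adj := fun x y =>
  inferInstanceAs (Decidable (adj4 r x y))

/-- the four k-cliques -/
def Qc (r : ℕ) (i : Fin 4) : Finset (W4 r) :=
  {Sum.inl i, Sum.inl (i + 3)} ∪ Finset.univ.image (fun t => Sum.inr (i, t))

lemma mem_Qc_inl {r : ℕ} (i m : Fin 4) :
    Sum.inl m ∈ Qc r i ↔ (m = i ∨ m = i + 3) := by
  simp [Qc]

lemma mem_Qc_inr {r : ℕ} (i j : Fin 4) (t : Fin r) :
    Sum.inr (j, t) ∈ Qc r i ↔ j = i := by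
  constructor
  · intro h
    simp only [Qc, Finset.mem_union, Finset.mem_insert, Finset.mem_singleton,
      Finset.mem_image] at h
    rcases h with (h | h) | ⟨u, _, h⟩
    · exact absurd h (by simp)
    · exact absurd h (by simp)
    · rw [Sum.inr.injEq, Prod.ext_iff] at h
      exact h.1.symm
  · rintro rfl
    simp [Qc]

lemma Qc_card {r : ℕ} (i : Fin 4) : (Qc r i).card = r + 2 := by
  rw [Qc, Finset.card_union_of_disjoint (by simp)]
  rw [Finset.card_image_of_injective _ (fun a b hab => by
    simpa [Prod.ext_iff] using hab)]
  have hne : (Sum.inl i : W4 r) ≠ Sum.inl (i + 3) := by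
    have : i ≠ i + 3 := by fin_cases i <;> decide
    simpa using this
  rw [Finset.card_pair hne, Finset.card_univ, Fintype.card_fin]
  omega

lemma Qc_clique {r : ℕ} (i : Fin 4) :
    ∀ u ∈ Qc r i, ∀ v ∈ Qc r i, u ≠ v → (G4 r).Adj u v := by
  have h31 : ∀ i : Fin 4, i = i + 3 + 1 := by decide
  rintro (m | ⟨j, t⟩) hu (m' | ⟨j', t'⟩) hv hne
  · rw [mem_Qc_inl] at hu hv
    show m ≠ m'
    intro h
    exact hne (by rw [h])
  · rw [mem_Qc_inl] at hu
    rw [mem_Qc_inr] at hv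
    subst hv
    show j' = m ∨ j' = m + 1 ∨ _
    rcases hu with rfl | rfl
    · exact Or.inl rfl
    · exact Or.inr (Or.inl (h31 j'))
  · rw [mem_Qc_inl] at hv
    rw [mem_Qc_inr] at hu
    subst hu
    show j = m' ∨ j = m' + 1 ∨ _
    rcases hv with rfl | rfl
    · exact Or.inl rfl
    · exact Or.inr (Or.inl (h31 j))
  · rw [mem_Qc_inr] at hu hv
    subst hu hv
    refine ⟨rfl, fun h => hne ?_⟩
    rw [h]

/-- color of private vertices for the full k-coloring -/
def colP : ℕ → ℕ → ℕ
  | 0, t => if t < 2 then t + 1 else t + 2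
  | 1, t => t + 2
  | 2, t => if t = 0 then 0 else t + 2
  | _, t => if t < 2 then t else t + 2

def ck4 (r : ℕ) : W4 r → ℕ
  | .inl m => m.val
  | .inr (j, t) => colP j.val t.val

lemma ck4_lt {r : ℕ} (hr : 2 ≤ r) : ∀ w, ck4 r w < r + 2 := by
  rintro (m | ⟨j, t⟩)
  · have := m.isLt
    simp only [ck4]
    omega
  · have := t.isLt
    simp only [ck4]
    fin_cases j <;> simp only [colP] <;> (try split_ifs) <;> omega

lemma colP_ne_left (m j t : ℕ) (hm : m < 4) (hj : j < 4)
    (h : j = m ∨ j = (m + 1) % 4 ∨ (m = 0 ∧ j = 2 ∧ t = 1)) : m ≠ colP j t := by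
  interval_cases m <;> interval_cases j <;> simp only [colP] <;>
    (try split_ifs) <;> omega

lemma colP_inj (j t u : ℕ) (h : t ≠ u) : colP j t ≠ colP j u := by
  rcases j with _ | _ | _ | j <;> simp only [colP] <;> (try split_ifs) <;> omega

lemma fin4_val_add_one (m : Fin 4) : ((m + 1 : Fin 4)).val = (m.val + 1) % 4 := by
  rw [Fin.val_add]
  rfl

lemma adj4_val {r : ℕ} {m j : Fin 4} {t : Fin r}
    (h : j = m ∨ j = m + 1 ∨ (m = 0 ∧ j = 2 ∧ t.val = 1)) :
    j.val = m.val ∨ j.val = (m.val + 1) % 4 ∨ (m.val = 0 ∧ j.val = 2 ∧ t.val = 1) := by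
  rcases h with rfl | rfl | ⟨rfl, rfl, ht⟩
  · exact Or.inl rfl
  · exact Or.inr (Or.inl (fin4_val_add_one m))
  · exact Or.inr (Or.inr ⟨rfl, rfl, ht⟩)

lemma ck4_proper {r : ℕ} (hr : 2 ≤ r) :
    ∀ u v, (G4 r).Adj u v → ck4 r u ≠ ck4 r v := by
  rintro (m | ⟨j, t⟩) (m' | ⟨j', t'⟩) h <;>
    simp only [G4, adj4, ck4] at h ⊢
  · simpa [Fin.ext_iff] using h
  · exact colP_ne_left m.val j'.val t'.val m.isLt j'.isLt (adj4_val h)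
  · exact (colP_ne_left m'.val j.val t.val m'.isLt j.isLt (adj4_val h)).symm
  · obtain ⟨rfl, hne⟩ := h
    exact colP_inj j.val t.val t'.val (fun hh => hne (Fin.ext hh))

lemma rob2_G4 {r : ℕ} (hr : 2 ≤ r) :
    ∀ S : Finset (W4 r), S.card ≤ 2 → (∀ u ∈ S, ∀ v ∈ S, ¬ (G4 r).Adj u v) →
    ∃ Q : Finset (W4 r), Q.card = r + 2 ∧
      (∀ u ∈ Q, ∀ v ∈ Q, u ≠ v → (G4 r).Adj u v) ∧ ∀ w ∈ Q, w ∉ S := by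
  intro S hcard hindep
  suffices h : ∃ i : Fin 4, ∀ w ∈ S, w ∉ Qc r i by
    obtain ⟨i, hi⟩ := h
    exact ⟨Qc r i, Qc_card i, Qc_clique i, fun w hw hwS => hi w hwS hw⟩
  obtain h0 | h1 | h2 : S.card = 0 ∨ S.card = 1 ∨ S.card = 2 := by omega
  · refine ⟨0, ?_⟩
    rw [Finset.card_eq_zero] at h0
    subst h0
    simp
  · rw [Finset.card_eq_one] at h1
    obtain ⟨a, rfl⟩ := h1
    rcases a with m | ⟨j, t⟩
    · refine ⟨m + 2, ?_⟩
      intro w hw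
      rw [Finset.mem_singleton] at hw
      subst hw
      rw [mem_Qc_inl]
      have : ¬ (m = m + 2 ∨ m = m + 2 + 3) := by fin_cases m <;> decide
      exact this
    · refine ⟨j + 1, ?_⟩
      intro w hw
      rw [Finset.mem_singleton] at hw
      subst hw
      rw [mem_Qc_inr]
      have : j ≠ j + 1 := by fin_cases j <;> decide
      exact this
  · rw [Finset.card_eq_two] at h2
    obtain ⟨a, b, hab, rfl⟩ := h2
    have hnadj : ¬ (G4 r).Adj a b := hindep a (by simp) b (by simp)
    have hgoal : ∀ i : Fin 4, a ∉ Qc r i → b ∉ Qc r i → ∃ i : Fin 4, ∀ w ∈ ({a, b} : Finset (W4 r)), w ∉ Qc r i := by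
      intro i ha hb
      refine ⟨i, ?_⟩
      intro w hw
      rw [Finset.mem_insert, Finset.mem_singleton] at hw
      rcases hw with rfl | rfl
      · exact ha
      · exact hb
    rcases a with m | ⟨j, t⟩ <;> rcases b with m' | ⟨j', t'⟩
    · exfalso
      apply hnadj
      show m ≠ m'
      intro h
      exact hab (by rw [h])
    · have hj : ¬ (j' = m ∨ j' = m + 1) := by
        intro h
        exact hnadj (show _ ∨ _ ∨ _ from h.imp id Or.inl)
      have key : ∀ mm jj : Fin 4, ¬ (jj = mm ∨ jj = mm + 1) →
          (¬ (mm = (if jj = mm + 2 then mm + 3 else mm + 2) ∨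
              mm = (if jj = mm + 2 then mm + 3 else mm + 2) + 3) ∧
           jj ≠ (if jj = mm + 2 then mm + 3 else mm + 2)) := by decide
      obtain ⟨h1, h2⟩ := key m j' hj
      apply hgoal (if j' = m + 2 then m + 3 else m + 2)
      · rw [mem_Qc_inl]; exact h1
      · rw [mem_Qc_inr]; exact h2
    · have hj : ¬ (j = m' ∨ j = m' + 1) := by
        intro h
        exact hnadj ((G4 r).adj_symm (show _ ∨ _ ∨ _ from h.imp id Or.inl))
      have key : ∀ mm jj : Fin 4, ¬ (jj = mm ∨ jj = mm + 1) →
          (¬ (mm = (if jj = mm + 2 then mm + 3 else mm + 2) ∨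
              mm = (if jj = mm + 2 then mm + 3 else mm + 2) + 3) ∧
           jj ≠ (if jj = mm + 2 then mm + 3 else mm + 2)) := by decide
      obtain ⟨h1, h2⟩ := key m' j hj
      apply hgoal (if j = m' + 2 then m' + 3 else m' + 2)
      · rw [mem_Qc_inr]; exact h2
      · rw [mem_Qc_inl]; exact h1
    · have hjj : j ≠ j' := by
        rintro rfl
        have ht : t ≠ t' := by
          intro h
          exact hab (by rw [h])
        exact hnadj ⟨rfl, ht⟩
      have key : ∀ jj jj' : Fin 4, jj ≠ jj' →
          (jj ≠ (if jj' = jj + 1 then jj + 2 else jj + 1) ∧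
           jj' ≠ (if jj' = jj + 1 then jj + 2 else jj + 1)) := by decide
      obtain ⟨h1, h2⟩ := key j j' hjj
      apply hgoal (if j' = j + 1 then j + 2 else j + 1)
      · rw [mem_Qc_inr]; exact h1
      · rw [mem_Qc_inr]; exact h2

/-! ### pair deletion coloring -/

def colQ : ℕ → ℕ → ℕ
  | 0, t => if t < 1 then t else t + 1
  | 1, t => t + 1
  | 2, t => t + 1
  | _, t => if t < 1 then t else t + 1

def cp4 (r : ℕ) : W4 r → ℕ
  | .inl m => if m.val = 3 then 1 else 0
  | .inr (j, t) => colQ j.val t.val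

lemma cp4_lt {r : ℕ} (hr : 2 ≤ r) : ∀ w, cp4 r w < r + 1 := by
  rintro (m | ⟨j, t⟩) <;> simp only [cp4]
  · split_ifs <;> omega
  · have := t.isLt
    fin_cases j <;> simp only [colQ] <;> (try split_ifs) <;> omega

lemma colQ_ne_left (m j t : ℕ) (hm : m < 4) (hm0 : m ≠ 0) (hm2 : m ≠ 2) (hj : j < 4)
    (h : j = m ∨ j = (m + 1) % 4 ∨ (m = 0 ∧ j = 2 ∧ t = 1)) :
    (if m = 3 then 1 else 0) ≠ colQ j t := by
  interval_cases m <;> interval_cases j <;> simp only [colQ] <;>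
    (try split_ifs) <;> omega

lemma colQ_inj (j t u : ℕ) (h : t ≠ u) : colQ j t ≠ colQ j u := by
  rcases j with _ | _ | _ | j <;> simp only [colQ] <;> (try split_ifs) <;> omega

lemma cp4_proper {r : ℕ} (hr : 2 ≤ r) :
    ∀ u v, (G4 r).Adj u v → u ∉ ({Sum.inl 0, Sum.inl 2} : Finset (W4 r)) →
      v ∉ ({Sum.inl 0, Sum.inl 2} : Finset (W4 r)) → cp4 r u ≠ cp4 r v := by
  rintro (m | ⟨j, t⟩) (m' | ⟨j', t'⟩) h hu hv <;>
    simp only [Finset.mem_insert, Finset.mem_singleton, not_or] at hu hv <;>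
    simp only [G4, adj4, cp4] at h ⊢
  · -- both shared; m, m' ∈ {1,3}
    have hm0 : m ≠ 0 := fun hh => hu.1 (by rw [hh])
    have hm2 : m ≠ 2 := fun hh => hu.2 (by rw [hh])
    have hm0' : m' ≠ 0 := fun hh => hv.1 (by rw [hh])
    have hm2' : m' ≠ 2 := fun hh => hv.2 (by rw [hh])
    have h1 := m.isLt; have h2 := m'.isLt
    have hne : m.val ≠ m'.val := fun hh => h (Fin.ext hh)
    have e0 : m.val ≠ 0 := fun hh => hm0 (Fin.ext hh)
    have e2 : m.val ≠ 2 := fun hh => hm2 (Fin.ext hh)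
    have e0' : m'.val ≠ 0 := fun hh => hm0' (Fin.ext hh)
    have e2' : m'.val ≠ 2 := fun hh => hm2' (Fin.ext hh)
    split_ifs <;> omega
  · have hm0 : m.val ≠ 0 := fun hh => hu.1 (congrArg Sum.inl (Fin.ext (by simpa using hh)))
    have hm2 : m.val ≠ 2 := fun hh => hu.2 (congrArg Sum.inl (Fin.ext (by simpa using hh)))
    exact colQ_ne_left m.val j'.val t'.val m.isLt hm0 hm2 j'.isLt (adj4_val h)
  · have hm0 : m'.val ≠ 0 := fun hh => hv.1 (congrArg Sum.inl (Fin.ext (by simpa using hh)))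
    have hm2 : m'.val ≠ 2 := fun hh => hv.2 (congrArg Sum.inl (Fin.ext (by simpa using hh)))
    exact (colQ_ne_left m'.val j.val t.val m'.isLt hm0 hm2 j.isLt (adj4_val h)).symm
  · obtain ⟨rfl, hne⟩ := h
    exact colQ_inj j.val t.val t'.val (fun hh => hne (Fin.ext hh))

def Qp4 (r : ℕ) : Finset (W4 r) := (Qc r 0).erase (Sum.inl 0)

lemma Qp4_card {r : ℕ} : (Qp4 r).card = r + 1 := by
  rw [Qp4, Finset.card_erase_of_mem (by rw [mem_Qc_inl]; exact Or.inl rfl), Qc_card]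
  omega

lemma Qp4_clique {r : ℕ} : ∀ u ∈ Qp4 r, ∀ v ∈ Qp4 r, u ≠ v → (G4 r).Adj u v :=
  fun u hu v hv hne => Qc_clique 0 u (Finset.erase_subset _ _ hu) v
    (Finset.erase_subset _ _ hv) hne

lemma Qp4_disj {r : ℕ} : ∀ w ∈ Qp4 r, w ∉ ({Sum.inl 0, Sum.inl 2} : Finset (W4 r)) := by
  intro w hw
  simp only [Finset.mem_insert, Finset.mem_singleton, not_or]
  constructor
  · exact Finset.ne_of_mem_erase hw
  · rintro rfl
    have := Finset.mem_of_mem_erase hw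
    rw [mem_Qc_inl] at this
    rcases this with h | h <;> exact absurd h (by decide)

/-! ### triple deletion coloring -/

def T4 (r : ℕ) (hr : 2 ≤ r) : Finset (W4 r) :=
  {Sum.inl 0, Sum.inr (2, ⟨0, by omega⟩), Sum.inr (3, ⟨0, by omega⟩)}

lemma T4_card {r : ℕ} (hr : 2 ≤ r) : (T4 r hr).card = 3 := by
  rw [T4]
  rw [Finset.card_insert_of_notMem (by simp),
    Finset.card_insert_of_notMem (by simp [Prod.ext_iff]),
    Finset.card_singleton]

lemma T4_indep {r : ℕ} (hr : 2 ≤ r) :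
    ∀ u ∈ T4 r hr, ∀ v ∈ T4 r hr, ¬ (G4 r).Adj u v := by
  intro u hu v hv hadj
  rw [T4] at hu hv
  simp only [Finset.mem_insert, Finset.mem_singleton] at hu hv
  rcases hu with rfl | rfl | rfl <;> rcases hv with rfl | rfl | rfl <;>
    simp only [G4, adj4] at hadj
  · exact hadj rfl
  · rcases hadj with h | h | ⟨_, _, h⟩
    · exact absurd h (by decide)
    · exact absurd h (by decide)
    · exact Nat.zero_ne_one h
  · rcases hadj with h | h | ⟨_, h, _⟩
    · exact absurd h (by decide)
    · exact absurd h (by decide)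
    · exact absurd h (by decide)
  · rcases hadj with h | h | ⟨_, _, h⟩
    · exact absurd h (by decide)
    · exact absurd h (by decide)
    · exact Nat.zero_ne_one h
  · exact hadj.2 rfl
  · exact absurd hadj.1 (by decide)
  · rcases hadj with h | h | ⟨_, h, _⟩
    · exact absurd h (by decide)
    · exact absurd h (by decide)
    · exact absurd h (by decide)
  · exact absurd hadj.1 (by decide)
  · exact hadj.2 rfl

def colR : ℕ → ℕ → ℕ
  | 0, t => if t < 2 then t else t + 1
  | 1, t => t + 1
  | 2, t => t + 1
  | _, t => if t = 1 then 0 else t + 1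

def ct4 (r : ℕ) : W4 r → ℕ
  | .inl m => m.val - 1
  | .inr (j, t) => colR j.val t.val

lemma ct4_lt {r : ℕ} (hr : 2 ≤ r) : ∀ w, ct4 r w < r + 1 := by
  rintro (m | ⟨j, t⟩) <;> simp only [ct4]
  · have := m.isLt; omega
  · have := t.isLt
    fin_cases j <;> simp only [colR] <;> (try split_ifs) <;> omega

lemma colR_ne_left (m j t : ℕ) (hm : m < 4) (hm0 : m ≠ 0) (hj : j < 4)
    (h2 : j = 2 → t ≠ 0) (h3 : j = 3 → t ≠ 0)
    (h : j = m ∨ j = (m + 1) % 4) : m - 1 ≠ colR j t := by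
  interval_cases m <;> interval_cases j <;> simp only [colR] <;>
    (try split_ifs) <;> omega

lemma colR_inj (j t u : ℕ) (h : t ≠ u) : colR j t ≠ colR j u := by
  rcases j with _ | _ | _ | j <;> simp only [colR] <;> (try split_ifs) <;> omega

lemma ct4_proper {r : ℕ} (hr : 2 ≤ r) :
    ∀ u v, (G4 r).Adj u v → u ∉ T4 r hr → v ∉ T4 r hr → ct4 r u ≠ ct4 r v := by
  have memT : ∀ w : W4 r, w ∈ T4 r hr ↔ (w = Sum.inl 0 ∨
      w = Sum.inr (2, ⟨0, by omega⟩) ∨ w = Sum.inr (3, ⟨0, by omega⟩)) := by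
    intro w
    rw [T4]
    simp
  rintro (m | ⟨j, t⟩) (m' | ⟨j', t'⟩) h hu hv <;>
    rw [memT] at hu hv <;> push_neg at hu hv <;>
    simp only [G4, adj4, ct4] at h ⊢
  · have hm0 : m.val ≠ 0 := fun hh => hu.1 (congrArg Sum.inl (Fin.ext (by simpa using hh)))
    have hm0' : m'.val ≠ 0 := fun hh => hv.1 (congrArg Sum.inl (Fin.ext (by simpa using hh)))
    have h1 := m.isLt; have h2 := m'.isLt
    have hne : m.val ≠ m'.val := fun hh => h (Fin.ext hh)
    omega
  · -- inl m vs inr (j', t')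
    have hm0 : m.val ≠ 0 := fun hh => hu.1 (congrArg Sum.inl (Fin.ext (by simpa using hh)))
    have hx2 : j'.val = 2 → t'.val ≠ 0 := by
      intro hj ht
      exact hv.2.1 (by
        congr 1
        exact Prod.ext (Fin.ext (by simpa using hj)) (Fin.ext (by simpa using ht)))
    have hx3 : j'.val = 3 → t'.val ≠ 0 := by
      intro hj ht
      exact hv.2.2 (by
        congr 1
        exact Prod.ext (Fin.ext (by simpa using hj)) (Fin.ext (by simpa using ht)))
    have hval : j'.val = m.val ∨ j'.val = (m.val + 1) % 4 := by
      rcases h with rfl | rfl | ⟨hh, _, _⟩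
      · exact Or.inl rfl
      · exact Or.inr (fin4_val_add_one m)
      · exact absurd (congrArg Fin.val hh) (by simpa using hm0)
    exact colR_ne_left m.val j'.val t'.val m.isLt hm0 j'.isLt hx2 hx3 hval
  · have hm0 : m'.val ≠ 0 := fun hh => hv.1 (congrArg Sum.inl (Fin.ext (by simpa using hh)))
    have hx2 : j.val = 2 → t.val ≠ 0 := by
      intro hj ht
      exact hu.2.1 (by
        congr 1
        exact Prod.ext (Fin.ext (by simpa using hj)) (Fin.ext (by simpa using ht)))
    have hx3 : j.val = 3 → t.val ≠ 0 := by
      intro hj ht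
      exact hu.2.2 (by
        congr 1
        exact Prod.ext (Fin.ext (by simpa using hj)) (Fin.ext (by simpa using ht)))
    have hval : j.val = m'.val ∨ j.val = (m'.val + 1) % 4 := by
      rcases h with rfl | rfl | ⟨hh, _, _⟩
      · exact Or.inl rfl
      · exact Or.inr (fin4_val_add_one m')
      · exact absurd (congrArg Fin.val hh) (by simpa using hm0)
    exact (colR_ne_left m'.val j.val t.val m'.isLt hm0 j.isLt hx2 hx3 hval).symm
  · obtain ⟨rfl, hne⟩ := h
    exact colR_inj j.val t.val t'.val (fun hh => hne (Fin.ext hh))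

def Qt4 (r : ℕ) : Finset (W4 r) := (Qc r 1).erase (Sum.inl 0)

lemma Qt4_card {r : ℕ} : (Qt4 r).card = r + 1 := by
  rw [Qt4, Finset.card_erase_of_mem (by rw [mem_Qc_inl]; right; decide), Qc_card]
  omega

lemma Qt4_clique {r : ℕ} : ∀ u ∈ Qt4 r, ∀ v ∈ Qt4 r, u ≠ v → (G4 r).Adj u v :=
  fun u hu v hv hne => Qc_clique 1 u (Finset.erase_subset _ _ hu) v
    (Finset.erase_subset _ _ hv) hne

lemma Qt4_disj {r : ℕ} (hr : 2 ≤ r) : ∀ w ∈ Qt4 r, w ∉ T4 r hr := by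
  intro w hw hwT
  have hw1 : w ≠ Sum.inl 0 := Finset.ne_of_mem_erase hw
  have hw2 := Finset.mem_of_mem_erase hw
  rw [T4] at hwT
  simp only [Finset.mem_insert, Finset.mem_singleton] at hwT
  rcases hwT with rfl | rfl | rfl
  · exact hw1 rfl
  · rw [mem_Qc_inr] at hw2
    exact absurd hw2 (by decide)
  · rw [mem_Qc_inr] at hw2
    exact absurd hw2 (by decide)

/-! ### degrees -/

lemma degree_eq_sum {r : ℕ} (v : W4 r) :
    (G4 r).degree v = (∑ i : Fin 4, if (G4 r).Adj v (.inl i) then 1 else 0) +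
      ∑ j : Fin 4, ∑ t : Fin r, if (G4 r).Adj v (.inr (j, t)) then 1 else 0 := by
  rw [← SimpleGraph.card_neighborFinset_eq_degree, SimpleGraph.neighborFinset_eq_filter,
    Finset.card_filter, Fintype.sum_sum_type, Fintype.sum_prod_type]

lemma sum_boole_val_eq_one {r : ℕ} (hr : 2 ≤ r) :
    (∑ t : Fin r, if t.val = 1 then 1 else 0) = 1 := by
  rw [← Finset.card_filter]
  rw [show (Finset.univ.filter (fun t : Fin r => t.val = 1)) = {⟨1, by omega⟩} from by
    ext a
    simp [Fin.ext_iff]]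
  exact Finset.card_singleton _

lemma deg_inl0 {r : ℕ} (hr : 2 ≤ r) : (G4 r).degree (Sum.inl 0) = 2 * r + 4 := by
  rw [degree_eq_sum]
  have hA : (∑ i : Fin 4, if (G4 r).Adj (.inl 0) (.inl i) then 1 else 0) = 3 := by
    rw [Fin.sum_univ_four]
    rw [if_neg (show ¬ (G4 r).Adj (.inl 0) (.inl 0) from fun h => h rfl),
      if_pos (show (G4 r).Adj (.inl 0) (.inl 1) from (by decide : (0 : Fin 4) ≠ 1)),
      if_pos (show (G4 r).Adj (.inl 0) (.inl 2) from (by decide : (0 : Fin 4) ≠ 2)),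
      if_pos (show (G4 r).Adj (.inl 0) (.inl 3) from (by decide : (0 : Fin 4) ≠ 3))]
  have hB : (∑ j : Fin 4, ∑ t : Fin r, if (G4 r).Adj (.inl 0) (.inr (j, t)) then 1 else 0)
      = r + r + 1 + 0 := by
    rw [Fin.sum_univ_four]
    congr 1
    congr 1
    congr 1
    · -- j = 0
      rw [Finset.sum_congr rfl (fun t _ => if_pos
        (show (G4 r).Adj (.inl 0) (.inr (0, t)) from Or.inl rfl))]
      simp
    · -- j = 1
      rw [Finset.sum_congr rfl (fun t _ => if_pos
        (show (G4 r).Adj (.inl 0) (.inr (1, t)) from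
          Or.inr (Or.inl (by decide : (1 : Fin 4) = 0 + 1))))]
      simp
    · -- j = 2
      rw [Finset.sum_congr rfl (fun t _ =>
        (show (if (G4 r).Adj (.inl 0) (.inr (2, t)) then 1 else 0)
            = if t.val = 1 then 1 else 0 from by
        by_cases h : t.val = 1
        · rw [if_pos h, if_pos (show (G4 r).Adj (.inl 0) (.inr (2, t)) from
            Or.inr (Or.inr ⟨rfl, rfl, h⟩))]
        · rw [if_neg h, if_neg ?_]
          rintro (hh | hh | ⟨-, -, hh⟩)
          · exact absurd hh (by decide)
          · exact absurd hh (by decide)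
          · exact h hh))]
      exact sum_boole_val_eq_one hr
    · -- j = 3
      rw [Finset.sum_congr rfl (fun t _ => if_neg ?_)]
      · simp
      · rintro (hh | hh | ⟨-, hh, -⟩)
        · exact absurd hh (by decide)
        · exact absurd hh (by decide)
        · exact absurd hh (by decide)
  rw [hA, hB]
  omega

lemma deg_le_G4 {r : ℕ} (hr : 2 ≤ r) (v : W4 r) : (G4 r).degree v ≤ 2 * r + 4 := by
  rcases v with m | ⟨j, t⟩
  · by_cases hm : m = 0
    · subst hm
      rw [deg_inl0 hr]
    · rw [degree_eq_sum]
      have hA : (∑ i : Fin 4, if (G4 r).Adj (.inl m) (.inl i) then 1 else 0) ≤ 4 := by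
        calc _ ≤ ∑ _i : Fin 4, (1:ℕ) :=
              Finset.sum_le_sum (fun i _ => by split_ifs <;> omega)
          _ ≤ 4 := by decide
      have hB : (∑ j : Fin 4, ∑ t : Fin r, if (G4 r).Adj (.inl m) (.inr (j, t)) then 1 else 0)
          ≤ 2 * r := by
        have hpt : ∀ (j : Fin 4) (t : Fin r),
            (if (G4 r).Adj (.inl m) (.inr (j, t)) then 1 else 0) ≤
            ((if j = m then 1 else 0) + (if j = m + 1 then 1 else 0) : ℕ) := by
          intro j t
          by_cases h : (G4 r).Adj (.inl m) (.inr (j, t))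
          · rcases h with h | h | ⟨h, -, -⟩
            · rw [if_pos (show (G4 r).Adj (.inl m) (.inr (j,t)) from Or.inl h), if_pos h]
              exact Nat.le_add_right 1 _
            · rw [if_pos (show (G4 r).Adj (.inl m) (.inr (j,t)) from Or.inr (Or.inl h)),
                if_pos h]
              exact Nat.le_add_left 1 _
            · exact absurd h hm
          · rw [if_neg h]
            omega
        calc (∑ j : Fin 4, ∑ t : Fin r, if (G4 r).Adj (.inl m) (.inr (j, t)) then 1 else 0)
            ≤ ∑ j : Fin 4, ∑ _t : Fin r,
              ((if j = m then 1 else 0) + (if j = m + 1 then 1 else 0) : ℕ) :=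
              Finset.sum_le_sum (fun j _ => Finset.sum_le_sum (fun t _ => hpt j t))
          _ = ∑ j : Fin 4, r * ((if j = m then 1 else 0) + (if j = m + 1 then 1 else 0)) := by
              refine Finset.sum_congr rfl (fun j _ => ?_)
              rw [Finset.sum_const, Finset.card_univ, Fintype.card_fin, smul_eq_mul]
          _ = r * ∑ j : Fin 4, ((if j = m then 1 else 0) + (if j = m + 1 then 1 else 0)) := by
              rw [Finset.mul_sum]
          _ ≤ 2 * r := by
              rw [Finset.sum_add_distrib, Finset.sum_ite_eq' Finset.univ m (fun _ => 1),
                Finset.sum_ite_eq' Finset.univ (m+1) (fun _ => 1)]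
              simp only [Finset.mem_univ, if_true]
              omega
      omega
  · rw [degree_eq_sum]
    have hA : (∑ i : Fin 4, if (G4 r).Adj (.inr (j, t)) (.inl i) then 1 else 0) ≤ 4 := by
      calc _ ≤ ∑ _i : Fin 4, (1:ℕ) :=
            Finset.sum_le_sum (fun i _ => by split_ifs <;> omega)
        _ ≤ 4 := by decide
    have hB : (∑ j' : Fin 4, ∑ u : Fin r, if (G4 r).Adj (.inr (j, t)) (.inr (j', u)) then 1 else 0)
        ≤ r := by
      have hpt : ∀ (j' : Fin 4) (u : Fin r),
          (if (G4 r).Adj (.inr (j, t)) (.inr (j', u)) then 1 else 0) ≤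
          (if j' = j then 1 else 0 : ℕ) := by
        intro j' u
        by_cases h : (G4 r).Adj (.inr (j, t)) (.inr (j', u))
        · have h' : j = j' ∧ t ≠ u := h
          rw [if_pos h, if_pos h'.1.symm]
        · rw [if_neg h]
          omega
      calc _ ≤ ∑ j' : Fin 4, ∑ _u : Fin r, (if j' = j then 1 else 0 : ℕ) :=
            Finset.sum_le_sum (fun j' _ => Finset.sum_le_sum (fun u _ => hpt j' u))
        _ = ∑ j' : Fin 4, r * (if j' = j then 1 else 0 : ℕ) := by
            refine Finset.sum_congr rfl (fun j' _ => ?_)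
            rw [Finset.sum_const, Finset.card_univ, Fintype.card_fin, smul_eq_mul]
        _ = ∑ j' : Fin 4, (if j' = j then r else 0 : ℕ) := by
            refine Finset.sum_congr rfl (fun j' _ => ?_)
            split_ifs <;> simp
        _ ≤ r := by
            rw [Finset.sum_ite_eq' Finset.univ j (fun _ => r)]
            simp
    omega

set_option maxHeartbeats 1000000 in
lemma maxDeg_G4 {r : ℕ} (hr : 2 ≤ r) : maxDeg (G4 r) = 2 * (r + 2) := by
  rw [maxDeg_eq_sup_degree]
  apply le_antisymm
  · refine Finset.sup_le (fun v _ => ?_)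
    have := deg_le_G4 hr v
    omega
  · have h := Finset.le_sup (f := fun v => (G4 r).degree v)
      (Finset.mem_univ (Sum.inl 0 : W4 r))
    beta_reduce at h
    rw [deg_inl0 hr] at h
    omega

def edges3 : List (ℕ × ℕ) :=
  [(0,1),(0,2),(0,3),(0,4),(0,5),(0,8),(1,2),(1,5),(1,6),(2,3),(2,6),(2,7),(2,8),(3,4),(3,7)]

def adj3 (x y : Fin 9) : Prop :=
  (x.val, y.val) ∈ edges3 ∨ (y.val, x.val) ∈ edges3

instance : DecidableRel adj3 := fun x y =>
  inferInstanceAs (Decidable (_ ∨ _))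

def G3 : SimpleGraph (Fin 9) where
  Adj := adj3
  symm := ⟨fun x y h => (by decide : ∀ x y : Fin 9, adj3 x y → adj3 y x) x y h⟩
  loopless := ⟨fun x h => (by decide : ∀ x : Fin 9, ¬ adj3 x x) x h⟩

instance : DecidableRel G3.Adj := fun x y => inferInstanceAs (Decidable (adj3 x y))


set_option maxRecDepth 10000 in
def gadget3 : Gadget 3 (Fin 9) where
  H := G3
  ck := fun w => ([0,1,2,1,2,2,0,0,1] : List ℕ).getD w.val 0
  ck_lt := by decide
  ck_proper := by decide
  rob2 := by
    intro S hcard hindep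
    have hcliques : ∀ Q ∈ ([{0,3,4},{0,1,5},{1,2,6},{2,3,7},{0,2,8}] :
        List (Finset (Fin 9))), Q.card = 3 ∧ ∀ u ∈ Q, ∀ v ∈ Q, u ≠ v → G3.Adj u v := by
      decide
    have key2 : ∀ a b : Fin 9, ¬ G3.Adj a b →
        ((∀ w ∈ ({0,3,4} : Finset (Fin 9)), w ≠ a ∧ w ≠ b) ∨
         (∀ w ∈ ({0,1,5} : Finset (Fin 9)), w ≠ a ∧ w ≠ b) ∨
         (∀ w ∈ ({1,2,6} : Finset (Fin 9)), w ≠ a ∧ w ≠ b) ∨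
         (∀ w ∈ ({2,3,7} : Finset (Fin 9)), w ≠ a ∧ w ≠ b) ∨
         (∀ w ∈ ({0,2,8} : Finset (Fin 9)), w ≠ a ∧ w ≠ b)) := by
      decide
    obtain h0 | h1 | h2 : S.card = 0 ∨ S.card = 1 ∨ S.card = 2 := by omega
    · rw [Finset.card_eq_zero] at h0
      subst h0
      refine ⟨{0,3,4}, (hcliques _ (by simp)).1, (hcliques _ (by simp)).2, by simp⟩
    · rw [Finset.card_eq_one] at h1
      obtain ⟨a, rfl⟩ := h1
      rcases key2 a a (G3.loopless.irrefl a) with h | h | h | h | h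
      · exact ⟨{0,3,4}, (hcliques _ (by simp)).1, (hcliques _ (by simp)).2,
          fun w hw => by simpa using (h w hw).1⟩
      · exact ⟨{0,1,5}, (hcliques _ (by simp)).1, (hcliques _ (by simp)).2,
          fun w hw => by simpa using (h w hw).1⟩
      · exact ⟨{1,2,6}, (hcliques _ (by simp)).1, (hcliques _ (by simp)).2,
          fun w hw => by simpa using (h w hw).1⟩
      · exact ⟨{2,3,7}, (hcliques _ (by simp)).1, (hcliques _ (by simp)).2,
          fun w hw => by simpa using (h w hw).1⟩
      · exact ⟨{0,2,8}, (hcliques _ (by simp)).1, (hcliques _ (by simp)).2,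
          fun w hw => by simpa using (h w hw).1⟩
    · rw [Finset.card_eq_two] at h2
      obtain ⟨a, b, hab, rfl⟩ := h2
      have hna : ¬ G3.Adj a b := hindep a (by simp) b (by simp)
      have hmem : ∀ (Q : Finset (Fin 9)), (∀ w ∈ Q, w ≠ a ∧ w ≠ b) →
          ∀ w ∈ Q, w ∉ ({a, b} : Finset (Fin 9)) := by
        intro Q hQ w hw
        simp only [Finset.mem_insert, Finset.mem_singleton, not_or]
        exact hQ w hw
      rcases key2 a b hna with h | h | h | h | h
      · exact ⟨{0,3,4}, (hcliques _ (by simp)).1, (hcliques _ (by simp)).2, hmem _ h⟩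
      · exact ⟨{0,1,5}, (hcliques _ (by simp)).1, (hcliques _ (by simp)).2, hmem _ h⟩
      · exact ⟨{1,2,6}, (hcliques _ (by simp)).1, (hcliques _ (by simp)).2, hmem _ h⟩
      · exact ⟨{2,3,7}, (hcliques _ (by simp)).1, (hcliques _ (by simp)).2, hmem _ h⟩
      · exact ⟨{0,2,8}, (hcliques _ (by simp)).1, (hcliques _ (by simp)).2, hmem _ h⟩
  u₀ := 0
  v₀ := 2
  huv := by decide
  cp := fun w => ([0,0,0,0,1,1,1,1,0] : List ℕ).getD w.val 0
  cp_lt := by decide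
  cp_proper := by decide
  Qp := {1,5}
  Qp_card := by decide
  Qp_clique := by decide
  Qp_disj := by decide
  T := {1,3,8}
  T_card := by decide
  T_indep := by decide
  ct := fun w => ([0,0,1,0,1,1,0,0,0] : List ℕ).getD w.val 0
  ct_lt := by decide
  ct_proper := by decide
  Qt := {0,4}
  Qt_card := by decide
  Qt_clique := by decide
  Qt_disj := by decide
  hdeg := by
    rw [maxDeg_eq_sup_degree]
    decide

def gadget4 (r : ℕ) (hr : 2 ≤ r) : Gadget (r + 2) (W4 r) where
  H := G4 r
  ck := ck4 r
  ck_lt := ck4_lt hr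
  ck_proper := ck4_proper hr
  rob2 := rob2_G4 hr
  u₀ := .inl 0
  v₀ := .inl 2
  huv := (by decide : (0 : Fin 4) ≠ 2)
  cp := cp4 r
  cp_lt := cp4_lt hr
  cp_proper := cp4_proper hr
  Qp := Qp4 r
  Qp_card := Qp4_card
  Qp_clique := Qp4_clique
  Qp_disj := Qp4_disj
  T := T4 r hr
  T_card := T4_card hr
  T_indep := T4_indep hr
  ct := ct4 r
  ct_lt := ct4_lt hr
  ct_proper := ct4_proper hr
  Qt := Qt4 r
  Qt_card := Qt4_card
  Qt_clique := Qt4_clique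
  Qt_disj := Qt4_disj hr
  hdeg := maxDeg_G4 hr

/-- For all natural numbers $n ≥ 2$ and $k ≥ 3$ there exists a finite simple
graph $G$ with $χ(G) = k$, $Δ(G) = 2k$, $vs_χ(G) = 2n$, and
$ivs_χ(G) = 3n$. -/
theorem stmt_12 (n k : ℕ) (hn : 2 ≤ n) (hk : 3 ≤ k) :
    ∃ (m : ℕ) (G : SimpleGraph (Fin m)),
      chromNum G = k ∧ maxDeg G = 2 * k ∧
      vsChi G = 2 * n ∧ ivsChi G = 3 * n := by
  rcases Nat.lt_or_ge k 4 with hk4 | hk4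
  · have hk3 : k = 3 := by omega
    subst hk3
    exact gadget_main (by norm_num) gadget3 n (by omega)
  · obtain ⟨r, rfl⟩ : ∃ r, k = r + 2 := ⟨k - 2, by omega⟩
    have hr : 2 ≤ r := by omega
    exact gadget_main (by omega) (gadget4 r hr) n (by omega)
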